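/- (Model-set inclusion for the max overapproximation) Let n be a natural number, f, g : (Fin n → ℝ) → ℝ affine maps, B a set of points, and x_f, x_g ∈ B maximizers: for all x ∈ B, f x − g x ≤ f x_f − g x_f and g x − f x ≤ g x_g − f x_g, with f x_f − g x_f > 0 and g x_g − f x_g > 0. Set γ := f x_f − f x_g − g x_f + g x_g, μ := (f x_f − g x_f)/γ, and c := ((f x_f − g x_f)·(g x_g − f x_g))/γ. Then {x ∈ B | max (f x) (g x) > 0} ⊆ {x ∈ B | μ · f x + (1 − μ) · g x + c > 0}; i.e., replacing the constraint max(f, g) > 0 by the linear constraint μ f + (1−μ) g + c > 0 yields an overapproximation of the constraint's model set within B. -/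

import Mathlib

/-- An affine map from a real coordinate space to ℝ. -/
def IsAffineFunctional {a : ℕ} (f : (Fin a → ℝ) → ℝ) : Prop :=
  ∃ (w : Fin a → ℝ) (c : ℝ), ∀ z, f z = (∑ i, w i * z i) + c

/-- Model-set inclusion for the max overapproximation: replacing
`max (f x) (g x) > 0` by the linear constraint `μ f + (1 - μ) g + c > 0`
overapproximates the model set within `B`. -/
theorem max_overapprox_model_inclusion {n : ℕ}
    (f g : (Fin n → ℝ) → ℝ)
    (hf : IsAffineFunctional f) (hg : IsAffineFunctional g)
    (B : Set (Fin n → ℝ)) (xf xg : Fin n → ℝ)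
    (hxf : xf ∈ B) (hxg : xg ∈ B)
    (hmaxf : ∀ x ∈ B, f x - g x ≤ f xf - g xf)
    (hmaxg : ∀ x ∈ B, g x - f x ≤ g xg - f xg)
    (hposf : f xf - g xf > 0) (hposg : g xg - f xg > 0)
    (γ μ c : ℝ)
    (hγ : γ = f xf - f xg - g xf + g xg)
    (hμ : μ = (f xf - g xf) / γ)
    (hc : c = ((f xf - g xf) * (g xg - f xg)) / γ) :
    {x ∈ B | max (f x) (g x) > 0} ⊆ {x ∈ B | μ * f x + (1 - μ) * g x + c > 0} := by
  intro x hx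
  obtain ⟨hxB, hmax⟩ := hx
  refine ⟨hxB, ?_⟩
  have hγab : γ = (f xf - g xf) + (g xg - f xg) := by rw [hγ]; ring
  have hγpos : γ > 0 := by rw [hγab]; linarith
  have h1 := hmaxf x hxB
  have h2 := hmaxg x hxB
  have key : μ * f x + (1 - μ) * g x + c
      = ((f xf - g xf) * f x + (g xg - f xg) * g x
        + (f xf - g xf) * (g xg - f xg)) / γ := by
    rw [hμ, hc]
    field_simp
    rw [hγab]; ring_nf
  rw [key]
  apply div_pos _ hγpos
  rcases le_or_gt (f x) (g x) with h | h
  · have hm : max (f x) (g x) = g x := max_eq_right h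
    rw [hm] at hmax
    nlinarith
  · have hm : max (f x) (g x) = f x := max_eq_left h.le
    rw [hm] at hmax
    nlinarith
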